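/- Let K' ⊂ ℝ² be the image of a Jordan arc and L ⊂ ℝ² the image of another Jordan arc with L ∩ K' = ∅. Then any two points x, y ∈ ℝ² \ (L ∪ K') can be joined by a path in ℝ² \ (L ∪ K'); i.e. the complement of the union of two disjoint arcs in the plane is path-connected. -/

import Mathlib

open Set Metric Topology Filter

/-- `A` is a Jordan arc: a homeomorphic image of `[0,1]`. -/
def IsJordanArc {X : Type*} [TopologicalSpace X] (A : Set X) : Prop :=
  ∃ φ : ℝ → X, ContinuousOn φ (Icc 0 1) ∧ InjOn φ (Icc 0 1) ∧ A = φ '' Icc 0 1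

noncomputable section

/-- A continuous function on a preconnected set with values in `2π·ℤ` is constant. -/
private lemma discrete_const {X : Type*} [TopologicalSpace X] {s : Set X}
    (hs : IsPreconnected s) {f : X → ℝ} (hf : ContinuousOn f s)
    (hd : ∀ x ∈ s, ∃ k : ℤ, f x = 2 * Real.pi * k)
    {x y : X} (hx : x ∈ s) (hy : y ∈ s) : f x = f y := by
  have hpi := Real.pi_pos
  obtain ⟨kx, hkx⟩ := hd x hx
  obtain ⟨ky, hky⟩ := hd y hy
  by_contra hne
  have hkk : kx ≠ ky := by rintro rfl; exact hne (hkx.trans hky.symm)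
  have himage : IsPreconnected (f '' s) := hs.image _ hf
  have key : ∀ w ∈ Icc (f x) (f y) ∪ Icc (f y) (f x), ∃ k : ℤ, w = 2 * Real.pi * k := by
    rintro w (hw | hw)
    · obtain ⟨z, hz, hzw⟩ := himage.Icc_subset ⟨x, hx, rfl⟩ ⟨y, hy, rfl⟩ hw
      obtain ⟨k, hk⟩ := hd z hz
      exact ⟨k, by rw [← hzw]; exact hk⟩
    · obtain ⟨z, hz, hzw⟩ := himage.Icc_subset ⟨y, hy, rfl⟩ ⟨x, hx, rfl⟩ hw
      obtain ⟨k, hk⟩ := hd z hz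
      exact ⟨k, by rw [← hzw]; exact hk⟩
  have parity : ∀ k₀ k : ℤ, 2 * Real.pi * k₀ + Real.pi = 2 * Real.pi * k → False := by
    intro k₀ k hk
    have h2 : Real.pi * (2 * (k₀ : ℝ) + 1) = Real.pi * (2 * (k : ℝ)) := by
      ring_nf; ring_nf at hk; linarith
    have : 2 * (k₀ : ℝ) + 1 = 2 * (k : ℝ) := mul_left_cancel₀ Real.pi_ne_zero h2
    have : 2 * k₀ + 1 = 2 * k := by exact_mod_cast this
    omega
  rcases lt_or_gt_of_ne hkk with h | h
  · have h1 : f x + 2 * Real.pi ≤ f y := by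
      rw [hkx, hky]
      have : (kx : ℝ) + 1 ≤ ky := by exact_mod_cast h
      nlinarith
    obtain ⟨k, hk⟩ := key (f x + Real.pi) (Or.inl ⟨by linarith, by linarith⟩)
    exact parity kx k (by rw [← hkx]; exact hk.symm ▸ rfl)
  · have h1 : f y + 2 * Real.pi ≤ f x := by
      rw [hkx, hky]
      have : (ky : ℝ) + 1 ≤ kx := by exact_mod_cast h
      nlinarith
    obtain ⟨k, hk⟩ := key (f y + Real.pi) (Or.inr ⟨by linarith, by linarith⟩)
    exact parity ky k (by rw [← hky]; exact hk.symm ▸ rfl)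

private lemma sub_im_exp_int {w : ℂ} (h : Complex.exp w = 1) :
    ∃ k : ℤ, w.im = 2 * Real.pi * k ∧ w = w.im * Complex.I := by
  obtain ⟨n, hn⟩ := Complex.exp_eq_one_iff.1 h
  refine ⟨n, ?_, ?_⟩
  · rw [hn]; simp [Complex.mul_im]; ring
  · rw [hn]; simp [Complex.ext_iff, Complex.mul_im, Complex.mul_re]

/-- Two logarithms of the same function on `[a,b]` have the same endpoint increment (imaginary
parts). -/
private lemma lift_diff_im {γ ℓ ℓ' : ℝ → ℂ} {a b : ℝ} (hab : a ≤ b)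
    (hc : ContinuousOn ℓ (Icc a b)) (hc' : ContinuousOn ℓ' (Icc a b))
    (he : ∀ t ∈ Icc a b, Complex.exp (ℓ t) = γ t)
    (he' : ∀ t ∈ Icc a b, Complex.exp (ℓ' t) = γ t) :
    (ℓ b - ℓ' b).im = (ℓ a - ℓ' a).im := by
  refine discrete_const isPreconnected_Icc
    (Complex.continuous_im.comp_continuousOn (hc.sub hc')) ?_
    (right_mem_Icc.2 hab) (left_mem_Icc.2 hab)
  intro t ht
  have h1 : Complex.exp (ℓ t - ℓ' t) = 1 := by
    rw [Complex.exp_sub, he t ht, he' t ht, div_self]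
    rw [← he t ht]; exact Complex.exp_ne_zero _
  obtain ⟨k, hk, -⟩ := sub_im_exp_int h1
  exact ⟨k, hk⟩

/-- Glue two logarithms on closed sets with preconnected intersection. -/
private lemma glue_log {X : Type*} [TopologicalSpace X] {A B : Set X} {γ ℓ₁ ℓ₂ : X → ℂ}
    (hA : IsClosed A) (hB : IsClosed B) (hAB : IsPreconnected (A ∩ B))
    (h₁ : ContinuousOn ℓ₁ A) (h₂ : ContinuousOn ℓ₂ B)
    (he₁ : ∀ x ∈ A, Complex.exp (ℓ₁ x) = γ x) (he₂ : ∀ x ∈ B, Complex.exp (ℓ₂ x) = γ x) :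
    ∃ ℓ : X → ℂ, ContinuousOn ℓ (A ∪ B) ∧ ∀ x ∈ A ∪ B, Complex.exp (ℓ x) = γ x := by
  classical
  have hexp1 : ∀ x ∈ A ∩ B, Complex.exp (ℓ₁ x - ℓ₂ x) = 1 := by
    intro x hx
    rw [Complex.exp_sub, he₁ x hx.1, he₂ x hx.2, div_self]
    rw [← he₁ x hx.1]; exact Complex.exp_ne_zero _
  obtain ⟨c, hc1, hc⟩ :
      ∃ c : ℂ, Complex.exp c = 1 ∧ ∀ x ∈ A ∩ B, ℓ₁ x = ℓ₂ x + c := by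
    rcases (A ∩ B).eq_empty_or_nonempty with hE | ⟨x₀, hx₀⟩
    · exact ⟨0, Complex.exp_zero, by rw [hE]; simp⟩
    · refine ⟨ℓ₁ x₀ - ℓ₂ x₀, hexp1 x₀ hx₀, ?_⟩
      intro x hx
      have hconst : (ℓ₁ x - ℓ₂ x).im = (ℓ₁ x₀ - ℓ₂ x₀).im := by
        refine discrete_const hAB
          (Complex.continuous_im.comp_continuousOn
            ((h₁.mono inter_subset_left).sub (h₂.mono inter_subset_right))) ?_ hx hx₀
        intro y hy
        obtain ⟨k, hk, -⟩ := sub_im_exp_int (hexp1 y hy)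
        exact ⟨k, hk⟩
      obtain ⟨-, -, hx'⟩ := sub_im_exp_int (hexp1 x hx)
      obtain ⟨-, -, hx₀'⟩ := sub_im_exp_int (hexp1 x₀ hx₀)
      have : ℓ₁ x - ℓ₂ x = ℓ₁ x₀ - ℓ₂ x₀ := by rw [hx', hx₀', hconst]
      linear_combination this
  refine ⟨fun x => if x ∈ A then ℓ₁ x else ℓ₂ x + c, ?_, ?_⟩
  · have hFA : ∀ x ∈ A, (if x ∈ A then ℓ₁ x else ℓ₂ x + c) = ℓ₁ x := fun x hx => if_pos hx
    have hFB : ∀ x ∈ B, (if x ∈ A then ℓ₁ x else ℓ₂ x + c) = ℓ₂ x + c := by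
      intro x hx
      by_cases hxA : x ∈ A
      · rw [if_pos hxA]; exact hc x ⟨hxA, hx⟩
      · rw [if_neg hxA]
    intro x hx
    apply ContinuousWithinAt.union
    · by_cases hxA : x ∈ A
      · exact ((h₁ x hxA).congr hFA (hFA x hxA))
      · exact continuousWithinAt_of_notMem_closure (by rwa [hA.closure_eq])
    · by_cases hxB : x ∈ B
      · exact (((h₂ x hxB).add continuousWithinAt_const).congr hFB (hFB x hxB))
      · exact continuousWithinAt_of_notMem_closure (by rwa [hB.closure_eq])
  · intro x hx
    by_cases hxA : x ∈ A
    · show Complex.exp (if x ∈ A then ℓ₁ x else ℓ₂ x + c) = γ x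
      rw [if_pos hxA]; exact he₁ x hxA
    · show Complex.exp (if x ∈ A then ℓ₁ x else ℓ₂ x + c) = γ x
      rw [if_neg hxA]
      rcases hx with hx | hx
      · exact absurd hx hxA
      · rw [Complex.exp_add, hc1, mul_one]; exact he₂ x hx

/-- Logarithm on a set where the function stays in a disc avoiding the origin. -/
private lemma small_log {X : Type*} [TopologicalSpace X] {γ : X → ℂ} {s : Set X} {c : ℂ}
    (hγ : ContinuousOn γ s) (hc : c ≠ 0) (hs : ∀ x ∈ s, dist (γ x) c < ‖c‖) :
    ∃ ℓ : X → ℂ, ContinuousOn ℓ s ∧ ∀ x ∈ s, Complex.exp (ℓ x) = γ x := by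
  have hslit : ∀ x ∈ s, γ x / c ∈ Complex.slitPlane := by
    intro x hx
    have h1 : γ x / c - 1 = (γ x - c) / c := by field_simp
    have h2 : ‖γ x / c - 1‖ < 1 := by
      rw [h1, norm_div, div_lt_one (norm_pos_iff.2 hc)]
      simpa [dist_eq_norm] using hs x hx
    have := Complex.mem_slitPlane_of_norm_lt_one h2
    simpa using this
  have hne : ∀ x ∈ s, γ x ≠ 0 := by
    intro x hx h0
    have := hs x hx
    rw [h0, dist_comm, dist_zero_right] at this
    exact lt_irrefl _ this
  refine ⟨fun x => Complex.log c + Complex.log (γ x / c), ?_, ?_⟩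
  · exact continuousOn_const.add ((hγ.div_const c).clog hslit)
  · intro x hx
    rw [Complex.exp_add, Complex.exp_log hc,
      Complex.exp_log (div_ne_zero (hne x hx) hc)]
    field_simp

/-- Every nonvanishing continuous function on a compact interval has a continuous logarithm. -/
private lemma interval_log {γ : ℝ → ℂ} {a b : ℝ} (hab : a ≤ b)
    (hγ : ContinuousOn γ (Icc a b)) (h0 : ∀ t ∈ Icc a b, γ t ≠ 0) :
    ∃ ℓ : ℝ → ℂ, ContinuousOn ℓ (Icc a b) ∧ ∀ t ∈ Icc a b, Complex.exp (ℓ t) = γ t := by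
  obtain ⟨t₀, ht₀, hmin⟩ := isCompact_Icc.exists_isMinOn (nonempty_Icc.2 hab) hγ.norm
  set m := ‖γ t₀‖ with hm
  have hmpos : 0 < m := norm_pos_iff.2 (h0 t₀ ht₀)
  have hmle : ∀ t ∈ Icc a b, m ≤ ‖γ t‖ := fun t ht => hmin ht
  obtain ⟨δ, hδpos, hδ⟩ := Metric.uniformContinuousOn_iff.1
    (isCompact_Icc.uniformContinuousOn_of_continuous hγ) m hmpos
  set η := δ / 2 with hη
  have hηpos : 0 < η := by positivity
  have claim : ∀ n : ℕ, ∀ u, u ∈ Icc a b → u ≤ a + n * η →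
      ∃ ℓ : ℝ → ℂ, ContinuousOn ℓ (Icc a u) ∧ ∀ t ∈ Icc a u, Complex.exp (ℓ t) = γ t := by
    intro n
    induction n with
    | zero =>
      intro u hu hun
      simp only [Nat.cast_zero, zero_mul, add_zero] at hun
      have : u = a := le_antisymm hun hu.1
      subst this
      refine small_log (hγ.mono ?_) (h0 u hu) ?_
      · exact Icc_subset_Icc le_rfl hu.2
      · intro t ht
        have : t = u := le_antisymm ht.2 ht.1
        subst this
        simpa using norm_pos_iff.2 (h0 t hu)
    | succ n ih =>
      intro u hu hun
      set v := max a (u - η) with hv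
      have hav : a ≤ v := le_max_left _ _
      have hvu : v ≤ u := max_le hu.1 (by linarith)
      have hvb : v ∈ Icc a b := ⟨hav, hvu.trans hu.2⟩
      have hvn : v ≤ a + n * η := by
        apply max_le
        · nlinarith [hηpos, Nat.cast_nonneg (α := ℝ) n]
        · push_cast at hun ⊢; linarith
      obtain ⟨ℓ₁, hc₁, he₁⟩ := ih v hvb hvn
      have hsub : Icc v u ⊆ Icc a b := Icc_subset_Icc hav hu.2
      have hsmall : ∀ t ∈ Icc v u, dist (γ t) (γ v) < m := by
        intro t ht
        apply hδ t (hsub ht) v hvb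
        rw [Real.dist_eq, abs_of_nonneg (by linarith [ht.1])]
        have : v ≥ u - η := le_max_right _ _
        have : t - v ≤ η := by linarith [ht.2]
        linarith [hδpos, hηpos]
      obtain ⟨ℓ₂, hc₂, he₂⟩ := small_log (hγ.mono hsub) (h0 v hvb)
        (fun t ht => lt_of_lt_of_le (hsmall t ht) (hmle v hvb))
      have hunion : Icc a v ∪ Icc v u = Icc a u := Icc_union_Icc_eq_Icc hav hvu
      have hinter : Icc a v ∩ Icc v u = Icc v v := by
        rw [Icc_inter_Icc, max_eq_right hav, min_eq_left hvu]
      obtain ⟨ℓ, hc, he⟩ := glue_log isClosed_Icc isClosed_Icc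
        (by rw [hinter]; exact isPreconnected_Icc) hc₁ hc₂ he₁ he₂
      exact ⟨ℓ, by rwa [hunion] at hc, by rwa [hunion] at he⟩
  obtain ⟨n, hn⟩ := exists_nat_ge ((b - a) / η)
  refine claim n b (right_mem_Icc.2 hab) ?_
  rw [div_le_iff₀ hηpos] at hn
  linarith

/-- A nonvanishing continuous function on a Jordan arc in a T2 space has a continuous
logarithm. -/
private lemma arc_log {K : Set ℂ} (hK : IsJordanArc K) {f : ℂ → ℂ}
    (hf : ContinuousOn f K) (h0 : ∀ z ∈ K, f z ≠ 0) :
    ∃ g : ℂ → ℂ, ContinuousOn g K ∧ ∀ z ∈ K, Complex.exp (g z) = f z := by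
  classical
  obtain ⟨φ, hφc, hφi, rfl⟩ := hK
  have hmaps : ∀ t : ℝ, t ∈ Icc (0:ℝ) 1 → φ t ∈ φ '' Icc 0 1 := fun t ht =>
    mem_image_of_mem _ ht
  obtain ⟨ℓ, hℓc, hℓe⟩ := interval_log (zero_le_one) (hf.comp hφc hmaps)
    (fun t ht => h0 _ (hmaps t ht))
  -- build the homeomorphism between [0,1] and the arc
  let restr : (Icc (0:ℝ) 1) → (φ '' Icc 0 1) := fun t => ⟨φ t, mem_image_of_mem _ t.2⟩
  have hrbij : Function.Bijective restr := by
    constructor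
    · intro s t hst
      apply Subtype.ext
      exact hφi s.2 t.2 (congrArg Subtype.val hst)
    · rintro ⟨z, t, ht, rfl⟩
      exact ⟨⟨t, ht⟩, rfl⟩
  have hrcont : Continuous restr :=
    Continuous.subtype_mk (continuousOn_iff_continuous_restrict.mp hφc) _
  let e : (Icc (0:ℝ) 1) ≃ₜ (φ '' Icc 0 1) :=
    Continuous.homeoOfEquivCompactToT2 (f := Equiv.ofBijective restr hrbij) hrcont
  refine ⟨fun z => if h : z ∈ φ '' Icc 0 1 then ℓ ((e.symm ⟨z, h⟩ : Icc (0:ℝ) 1) : ℝ)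
    else 0, ?_, ?_⟩
  · rw [continuousOn_iff_continuous_restrict]
    have : (fun z : (φ '' Icc 0 1) =>
        (fun z => if h : z ∈ φ '' Icc 0 1 then ℓ ((e.symm ⟨z, h⟩ : Icc (0:ℝ) 1) : ℝ) else 0)
          z.val) = fun z => (Icc (0:ℝ) 1).restrict ℓ (e.symm z) := by
      funext z
      show (if h : z.val ∈ φ '' Icc 0 1 then ℓ ((e.symm ⟨z.val, h⟩ : Icc (0:ℝ) 1) : ℝ) else 0)
        = (Icc (0:ℝ) 1).restrict ℓ (e.symm z)
      rw [dif_pos z.2]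
      rfl
    rw [Set.restrict_eq]
    show Continuous fun z : (φ '' Icc 0 1) =>
      (fun z => if h : z ∈ φ '' Icc 0 1 then ℓ ((e.symm ⟨z, h⟩ : Icc (0:ℝ) 1) : ℝ) else 0) z.val
    rw [this]
    exact (continuousOn_iff_continuous_restrict.mp hℓc).comp e.symm.continuous
  · intro z hz
    show Complex.exp (if h : z ∈ φ '' Icc 0 1 then ℓ ((e.symm ⟨z, h⟩ : Icc (0:ℝ) 1) : ℝ) else 0)
      = f z
    rw [dif_pos hz]
    set t : Icc (0:ℝ) 1 := e.symm ⟨z, hz⟩ with ht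
    have h1 : φ (t : ℝ) = z := by
      have := e.apply_symm_apply ⟨z, hz⟩
      have h2 : restr t = ⟨z, hz⟩ := this
      exact congrArg Subtype.val h2
    rw [hℓe (t : ℝ) t.2]
    show f (φ (t:ℝ)) = f z
    rw [h1]

/-- Key contradiction: if `F` is a global nonvanishing continuous function with
`F z * (z - b) = z - a` on a compact `K`, `b` is outside the component `U` of `a` in `Kᶜ`,
and `U` is bounded, we get a contradiction by a winding number argument. -/
private lemma aux_wind (K : Set ℂ) (hK : IsCompact K) (a b : ℂ) (ha : a ∉ K) (hb : b ∉ K)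
    (hbU : b ∉ connectedComponentIn Kᶜ a)
    (hUbd : Bornology.IsBounded (connectedComponentIn Kᶜ a))
    (F : ℂ → ℂ) (hF : Continuous F) (hF0 : ∀ z, F z ≠ 0)
    (hFK : ∀ z ∈ K, F z * (z - b) = z - a) : False := by
  classical
  set U := connectedComponentIn Kᶜ a with hU
  have haK : a ∈ Kᶜ := ha
  have haU : a ∈ U := mem_connectedComponentIn haK
  have hKo : IsOpen Kᶜ := hK.isClosed.isOpen_compl
  have hUopen : IsOpen U := hKo.connectedComponentIn
  have hclosU : closure U ⊆ U ∪ K := by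
    intro x hx
    by_cases hxK : x ∈ K
    · exact Or.inr hxK
    · left
      have hxc : x ∈ Kᶜ := hxK
      have hVopen : IsOpen (connectedComponentIn Kᶜ x) := hKo.connectedComponentIn
      have hxV : x ∈ connectedComponentIn Kᶜ x := mem_connectedComponentIn hxc
      obtain ⟨y, hyV, hyU⟩ := mem_closure_iff.1 hx _ hVopen hxV
      have h1 : connectedComponentIn Kᶜ a = connectedComponentIn Kᶜ y :=
        connectedComponentIn_eq hyU
      have h2 : connectedComponentIn Kᶜ x = connectedComponentIn Kᶜ y :=
        connectedComponentIn_eq hyV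
      show x ∈ connectedComponentIn Kᶜ a
      rw [h1, ← h2]; exact hxV
  set C := U ∪ K with hC
  have hCclosed : IsClosed C := by
    apply isClosed_of_closure_subset
    calc closure (U ∪ K) = closure U ∪ closure K := closure_union
      _ ⊆ (U ∪ K) ∪ K := union_subset_union hclosU hK.isClosed.closure_subset
      _ = C := by rw [union_assoc, union_self]
  have hbC : b ∉ C := by rintro (h | h); exacts [hbU h, hb h]
  have haC : a ∈ C := Or.inl haU
  have hUC : U ⊆ C := subset_union_left
  set N : ℂ → ℂ := C.piecewise (fun z => F z * (z - b)) (fun z => z - a) with hNdef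
  have hfr : ∀ z ∈ frontier C, F z * (z - b) = z - a := by
    intro z hz
    apply hFK
    have h1 : z ∈ C := hCclosed.frontier_subset hz
    have h2 : z ∉ interior C := hz.2
    have h3 : z ∉ U := fun hzU => h2 (interior_maximal hUC hUopen hzU)
    rcases h1 with h | h
    · exact absurd h h3
    · exact h
  have hNcont : Continuous N :=
    Continuous.piecewise hfr (hF.mul (continuous_id.sub continuous_const))
      (continuous_id.sub continuous_const)
  have hN0 : ∀ z, N z ≠ 0 := by
    intro z
    by_cases hz : z ∈ C
    · rw [hNdef, Set.piecewise_eq_of_mem _ _ _ hz]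
      exact mul_ne_zero (hF0 z) (sub_ne_zero.2 (by rintro rfl; exact hbC hz))
    · rw [hNdef, Set.piecewise_eq_of_notMem _ _ _ hz]
      exact sub_ne_zero.2 (by rintro rfl; exact hz haC)
  obtain ⟨R, hRpos, hRsub⟩ := (hUbd.union hK.isBounded).subset_ball_lt 0 a
  have hNout : ∀ z, z ∉ ball a R → N z = z - a := by
    intro z hz
    rw [hNdef, Set.piecewise_eq_of_notMem]
    exact fun hzC => hz (hRsub hzC)
  obtain ⟨z₀, hz₀, hminN⟩ := (isCompact_closedBall a R).exists_isMinOn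
    (nonempty_closedBall.2 hRpos.le) hNcont.norm.continuousOn
  set m := ‖N z₀‖ with hm
  have hmpos : 0 < m := norm_pos_iff.2 (hN0 z₀)
  have hmle : ∀ z ∈ closedBall a R, m ≤ ‖N z‖ := fun z hz => hminN hz
  obtain ⟨δ, hδpos, hδ⟩ := Metric.uniformContinuousOn_iff.1
    ((isCompact_closedBall a R).uniformContinuousOn_of_continuous hNcont.continuousOn) m hmpos
  set Λ : ℝ → ℝ → ℂ :=
    fun s t => N (a + ((s * R : ℝ) : ℂ) * Complex.exp ((t : ℂ) * Complex.I)) with hΛ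
  have hΛcont : ∀ s, Continuous (Λ s) := by
    intro s
    apply hNcont.comp
    exact continuous_const.add (continuous_const.mul
      (Complex.continuous_exp.comp (Complex.continuous_ofReal.mul continuous_const)))
  have hnorm_exp : ∀ t : ℝ, ‖Complex.exp ((t : ℂ) * Complex.I)‖ = 1 := by
    intro t
    exact Complex.norm_exp_ofReal_mul_I t
  have hmem : ∀ s ∈ Icc (0:ℝ) 1, ∀ t : ℝ,
      a + ((s * R : ℝ) : ℂ) * Complex.exp ((t : ℂ) * Complex.I) ∈ closedBall a R := by
    intro s hs t
    rw [mem_closedBall, dist_comm, dist_eq_norm]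
    have h1 : a - (a + ((s * R : ℝ) : ℂ) * Complex.exp ((t : ℂ) * Complex.I))
        = -(((s * R : ℝ) : ℂ) * Complex.exp ((t : ℂ) * Complex.I)) := by ring
    rw [h1, norm_neg, norm_mul, hnorm_exp, mul_one, Complex.norm_real, Real.norm_eq_abs,
      abs_of_nonneg (by nlinarith [hs.1, hRpos] : (0:ℝ) ≤ s * R)]
    nlinarith [hs.2, hRpos]
  have hΛnorm : ∀ s ∈ Icc (0:ℝ) 1, ∀ t, m ≤ ‖Λ s t‖ := fun s hs t => hmle _ (hmem s hs t)
  have hΛ0 : ∀ s t, Λ s t ≠ 0 := fun s t => hN0 _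
  have hlift : ∀ s : ℝ, ∃ ℓ : ℝ → ℂ, ContinuousOn ℓ (Icc 0 (2 * Real.pi)) ∧
      ∀ t ∈ Icc (0:ℝ) (2 * Real.pi), Complex.exp (ℓ t) = Λ s t := fun s =>
    interval_log (by positivity) (hΛcont s).continuousOn (fun t _ => hΛ0 s t)
  choose ℓs hℓc hℓe using hlift
  set W : ℝ → ℝ := fun s => (ℓs s (2 * Real.pi) - ℓs s 0).im with hW
  have h2π : (0:ℝ) ≤ 2 * Real.pi := by positivity
  have hT : (2 * Real.pi) ∈ Icc (0:ℝ) (2 * Real.pi) := right_mem_Icc.2 h2π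
  have h0T : (0:ℝ) ∈ Icc (0:ℝ) (2 * Real.pi) := left_mem_Icc.2 h2π
  have hstep : ∀ s ∈ Icc (0:ℝ) 1, ∀ s' ∈ Icc (0:ℝ) 1, |s' - s| * R < δ → W s' = W s := by
    intro s hs s' hs' hss
    set ρ : ℝ → ℂ := fun t => Λ s' t / Λ s t with hρ
    have hρsmall : ∀ t : ℝ, dist (Λ s' t) (Λ s t) < m := by
      intro t
      apply hδ _ (hmem s' hs' t) _ (hmem s hs t)
      rw [dist_eq_norm]
      have h1 : a + ((s' * R : ℝ) : ℂ) * Complex.exp ((t : ℂ) * Complex.I)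
          - (a + ((s * R : ℝ) : ℂ) * Complex.exp ((t : ℂ) * Complex.I))
          = (((s' - s) * R : ℝ) : ℂ) * Complex.exp ((t : ℂ) * Complex.I) := by
        push_cast; ring
      rw [h1, norm_mul, hnorm_exp, mul_one, Complex.norm_real, Real.norm_eq_abs,
        abs_mul, abs_of_nonneg hRpos.le]
      exact hss
    have hρball : ∀ t : ℝ, ρ t ∈ Metric.ball (1:ℂ) 1 := by
      intro t
      rw [mem_ball, dist_eq_norm]
      have h1 : ρ t - 1 = (Λ s' t - Λ s t) / Λ s t := by
        rw [hρ, sub_div, div_self (hΛ0 s t)]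
      rw [h1, norm_div, div_lt_one (norm_pos_iff.2 (hΛ0 s t))]
      calc ‖Λ s' t - Λ s t‖ < m := by rw [← dist_eq_norm]; exact hρsmall t
        _ ≤ ‖Λ s t‖ := hΛnorm s hs t
    have hρslit : ∀ t : ℝ, ρ t ∈ Complex.slitPlane :=
      fun t => Complex.ball_one_subset_slitPlane (hρball t)
    set ℓ₂ : ℝ → ℂ := fun t => ℓs s t + Complex.log (ρ t) with hℓ₂
    have hc₂ : ContinuousOn ℓ₂ (Icc 0 (2 * Real.pi)) := by
      apply (hℓc s).add
      exact (((hΛcont s').continuousOn.div (hΛcont s).continuousOn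
        (fun t _ => hΛ0 s t)).clog (fun t _ => hρslit t))
    have he₂ : ∀ t ∈ Icc (0:ℝ) (2 * Real.pi), Complex.exp (ℓ₂ t) = Λ s' t := by
      intro t ht
      rw [hℓ₂]
      show Complex.exp (ℓs s t + Complex.log (ρ t)) = Λ s' t
      rw [Complex.exp_add, hℓe s t ht, Complex.exp_log (by
        exact div_ne_zero (hΛ0 s' t) (hΛ0 s t))]
      rw [hρ, mul_comm, div_mul_cancel₀ _ (hΛ0 s t)]
    have hdiff := lift_diff_im h2π (hℓc s') hc₂ (hℓe s') he₂
    have hexp2pi : Complex.exp (((2 * Real.pi : ℝ) : ℂ) * Complex.I)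
        = Complex.exp (((0 : ℝ) : ℂ) * Complex.I) := by
      have h2 : ((2 * Real.pi : ℝ) : ℂ) * Complex.I = 2 * (Real.pi : ℂ) * Complex.I := by
        push_cast; ring
      rw [h2, Complex.exp_two_pi_mul_I]
      norm_num
    have hΛper : ∀ u : ℝ, Λ u (2 * Real.pi) = Λ u 0 := by
      intro u
      show N (a + ((u * R : ℝ) : ℂ) * Complex.exp (((2 * Real.pi : ℝ) : ℂ) * Complex.I))
        = N (a + ((u * R : ℝ) : ℂ) * Complex.exp (((0 : ℝ) : ℂ) * Complex.I))
      rw [hexp2pi]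
    have hρper : ρ (2 * Real.pi) = ρ 0 := by rw [hρ]; simp [hΛper]
    have e1 : ℓ₂ (2 * Real.pi) = ℓs s (2 * Real.pi) + Complex.log (ρ (2 * Real.pi)) := rfl
    have e2 : ℓ₂ 0 = ℓs s 0 + Complex.log (ρ 0) := rfl
    rw [e1, e2, hρper] at hdiff
    simp only [Complex.sub_im, Complex.add_im] at hdiff
    rw [hW]
    simp only [Complex.sub_im]
    linarith
  have hW0 : W 0 = 0 := by
    have hΛ0t : ∀ t ∈ Icc (0:ℝ) (2 * Real.pi),
        Complex.exp (Complex.log (N a)) = Λ 0 t := by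
      intro t ht
      rw [Complex.exp_log (hN0 a), hΛ]
      norm_num
    have hdiff := lift_diff_im h2π (hℓc 0) continuousOn_const (hℓe 0) hΛ0t
    simp only [Complex.sub_im] at hdiff
    rw [hW]
    simp only [Complex.sub_im]
    linarith
  have hW1 : W 1 = 2 * Real.pi := by
    have hout : ∀ t : ℝ, Λ 1 t = ((R : ℝ) : ℂ) * Complex.exp ((t : ℂ) * Complex.I) := by
      intro t
      have hnb : a + ((1 * R : ℝ) : ℂ) * Complex.exp ((t : ℂ) * Complex.I) ∉ ball a R := by
        rw [mem_ball, dist_comm, dist_eq_norm]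
        have h1 : a - (a + ((1 * R : ℝ) : ℂ) * Complex.exp ((t : ℂ) * Complex.I))
            = -(((1 * R : ℝ) : ℂ) * Complex.exp ((t : ℂ) * Complex.I)) := by ring
        rw [h1, norm_neg, norm_mul, hnorm_exp, mul_one, Complex.norm_real, Real.norm_eq_abs,
          one_mul, abs_of_nonneg hRpos.le]
        exact lt_irrefl R
      show N (a + ((1 * R : ℝ) : ℂ) * Complex.exp ((t : ℂ) * Complex.I))
        = ((R : ℝ) : ℂ) * Complex.exp ((t : ℂ) * Complex.I)
      rw [hNout _ hnb]
      push_cast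
      ring
    have hlog : ∀ t ∈ Icc (0:ℝ) (2 * Real.pi),
        Complex.exp (((Real.log R : ℝ) : ℂ) + (t : ℂ) * Complex.I) = Λ 1 t := by
      intro t ht
      rw [hout, Complex.exp_add]
      congr 1
      rw [← Complex.ofReal_exp, Real.exp_log hRpos]
    have hcont : ContinuousOn (fun t : ℝ => ((Real.log R : ℝ) : ℂ) + (t : ℂ) * Complex.I)
        (Icc 0 (2 * Real.pi)) :=
      (continuous_const.add (Complex.continuous_ofReal.mul continuous_const)).continuousOn
    have hdiff := lift_diff_im h2π (hℓc 1) hcont (hℓe 1) hlog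
    simp only [Complex.sub_im, Complex.add_im, Complex.mul_im, Complex.ofReal_re,
      Complex.ofReal_im, Complex.I_re, Complex.I_im, Complex.add_re, Complex.mul_re] at hdiff
    rw [hW]
    simp only [Complex.sub_im]
    linarith [hdiff]
  obtain ⟨n, hn⟩ := exists_nat_gt (R / δ)
  have hnpos : 0 < (n : ℝ) := lt_of_le_of_lt (by positivity) hn
  have hRδ : R / (n : ℝ) < δ := by
    rw [div_lt_iff₀ hnpos]
    rw [div_lt_iff₀ hδpos] at hn
    linarith
  have hchain : ∀ k : ℕ, k ≤ n → W ((k : ℝ) / n) = W 0 := by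
    intro k hk
    induction k with
    | zero => norm_num
    | succ k ih =>
      have hk' : k ≤ n := Nat.le_of_succ_le hk
      have hmem1 : ((k : ℝ) / n) ∈ Icc (0:ℝ) 1 := by
        constructor
        · positivity
        · rw [div_le_one hnpos]; exact_mod_cast hk'
      have hmem2 : (((k : ℕ) + 1 : ℝ) / n) ∈ Icc (0:ℝ) 1 := by
        constructor
        · positivity
        · rw [div_le_one hnpos]; exact_mod_cast hk
      have hstepk : W (((k : ℕ) + 1 : ℝ) / n) = W ((k : ℝ) / n) := by
        apply hstep _ hmem1 _ hmem2
        have h1 : ((k : ℕ) + 1 : ℝ) / n - (k : ℝ) / n = 1 / n := by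
          field_simp
          ring
        rw [h1, abs_of_nonneg (by positivity : (0:ℝ) ≤ 1 / (n:ℝ))]
        calc 1 / (n : ℝ) * R = R / n := by ring
          _ < δ := hRδ
      have := ih hk'
      rw [← this, ← hstepk]
      norm_num
  have hend := hchain n le_rfl
  rw [div_self hnpos.ne'] at hend
  rw [hW1, hW0] at hend
  exact Real.pi_ne_zero (by linarith)

private lemma compl_ball_preconnected (R₀ : ℝ) :
    IsPreconnected {z : ℂ | R₀ < ‖z‖} := by
  have himg : {z : ℂ | R₀ < ‖z‖} =
      (fun p : ℝ × ℝ => (p.1 : ℂ) * Complex.exp ((p.2 : ℂ) * Complex.I)) ''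
        (Ioi R₀ ×ˢ univ) := by
    ext z
    constructor
    · intro hz
      refine ⟨(‖z‖, Complex.arg z), ⟨?_, trivial⟩, ?_⟩
      · simpa using hz
      · exact Complex.norm_mul_exp_arg_mul_I z
    · rintro ⟨⟨r, t⟩, ⟨hr, -⟩, rfl⟩
      show R₀ < ‖(r : ℂ) * Complex.exp ((t : ℂ) * Complex.I)‖
      have hnn : ‖(r : ℂ) * Complex.exp ((t : ℂ) * Complex.I)‖ = |r| := by
        rw [norm_mul, Complex.norm_real, Real.norm_eq_abs,
          Complex.norm_exp_ofReal_mul_I, mul_one]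
      rw [hnn]
      exact lt_of_lt_of_le hr (le_abs_self r)
  have hcont : Continuous (fun p : ℝ × ℝ => (p.1 : ℂ) * Complex.exp ((p.2 : ℂ) * Complex.I)) :=
    (Complex.continuous_ofReal.comp continuous_fst).mul
      (Complex.continuous_exp.comp
        ((Complex.continuous_ofReal.comp continuous_snd).mul continuous_const))
  rw [himg]
  exact ((isPreconnected_Ioi).prod isPreconnected_univ).image _ hcont.continuousOn

private lemma main_c (K₁ K₂ : Set ℂ) (h₁ : IsJordanArc K₁) (h₂ : IsJordanArc K₂)
    (hdisj : Disjoint K₁ K₂) : IsPathConnected (K₁ ∪ K₂)ᶜ := by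
  classical
  have hK₁cpt : IsCompact K₁ := by
    obtain ⟨φ, hc, -, rfl⟩ := h₁; exact isCompact_Icc.image_of_continuousOn hc
  have hK₂cpt : IsCompact K₂ := by
    obtain ⟨φ, hc, -, rfl⟩ := h₂; exact isCompact_Icc.image_of_continuousOn hc
  set K := K₁ ∪ K₂ with hKdef
  have hKcpt : IsCompact K := hK₁cpt.union hK₂cpt
  have hKo : IsOpen Kᶜ := hKcpt.isClosed.isOpen_compl
  have hsame : ∀ a ∈ Kᶜ, ∀ b ∈ Kᶜ, b ∈ connectedComponentIn Kᶜ a := by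
    intro a ha b hb
    by_contra hbU
    have hsub : ∀ z ∈ K, z ≠ a ∧ z ≠ b := fun z hz =>
      ⟨fun h => ha (h ▸ hz), fun h => hb (h ▸ hz)⟩
    set f : ℂ → ℂ := fun z => (z - a) / (z - b) with hf
    have hfc : ContinuousOn f K := ContinuousOn.div
      ((continuous_id.sub continuous_const).continuousOn)
      ((continuous_id.sub continuous_const).continuousOn)
      (fun z hz => sub_ne_zero.2 (hsub z hz).2)
    have hf0 : ∀ z ∈ K, f z ≠ 0 := fun z hz =>
      div_ne_zero (sub_ne_zero.2 (hsub z hz).1) (sub_ne_zero.2 (hsub z hz).2)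
    obtain ⟨g₁, hg₁c, hg₁e⟩ := arc_log h₁ (hfc.mono subset_union_left)
      (fun z hz => hf0 z (Or.inl hz))
    obtain ⟨g₂, hg₂c, hg₂e⟩ := arc_log h₂ (hfc.mono subset_union_right)
      (fun z hz => hf0 z (Or.inr hz))
    have hinter : K₁ ∩ K₂ = ∅ := disjoint_iff_inter_eq_empty.1 hdisj
    obtain ⟨g, hgc, hge⟩ := glue_log hK₁cpt.isClosed hK₂cpt.isClosed
      (by rw [hinter]; exact isPreconnected_empty) hg₁c hg₂c hg₁e hg₂e
    obtain ⟨G, hG⟩ := ContinuousMap.exists_restrict_eq (Y := ℂ) hKcpt.isClosed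
      ⟨K.restrict g, continuousOn_iff_continuous_restrict.1 hgc⟩
    have hGK : ∀ z ∈ K, G z = g z := fun z hz => DFunLike.congr_fun hG ⟨z, hz⟩
    obtain ⟨R₀, hR₀pos, hR₀⟩ := hKcpt.isBounded.subset_ball_lt 0 0
    have hS : IsPreconnected {z : ℂ | R₀ < ‖z‖} := compl_ball_preconnected R₀
    have hSK : {z : ℂ | R₀ < ‖z‖} ⊆ Kᶜ := by
      intro z hz hzK
      have h1 := hR₀ hzK
      rw [mem_ball, dist_zero_right] at h1
      exact absurd hz (by simpa using not_lt.2 h1.le)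
    have hdichot : Bornology.IsBounded (connectedComponentIn Kᶜ a)
        ∨ Bornology.IsBounded (connectedComponentIn Kᶜ b) := by
      by_contra hcon
      push_neg at hcon
      obtain ⟨u, hu, hu2⟩ : ∃ u ∈ connectedComponentIn Kᶜ a, R₀ < ‖u‖ := by
        by_contra hcC; push_neg at hcC
        exact hcon.1 ((isBounded_closedBall (x := (0:ℂ)) (r := R₀)).subset
          (fun w hw => by simpa [dist_zero_right] using (hcC w hw)))
      obtain ⟨v, hv, hv2⟩ : ∃ v ∈ connectedComponentIn Kᶜ b, R₀ < ‖v‖ := by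
        by_contra hcC; push_neg at hcC
        exact hcon.2 ((isBounded_closedBall (x := (0:ℂ)) (r := R₀)).subset
          (fun w hw => by simpa [dist_zero_right] using (hcC w hw)))
      have hSa : {z : ℂ | R₀ < ‖z‖} ⊆ connectedComponentIn Kᶜ a := by
        rw [connectedComponentIn_eq hu]
        exact hS.subset_connectedComponentIn hu2 hSK
      have hvb : v ∈ connectedComponentIn Kᶜ a := hSa hv2
      apply hbU
      have h2 : connectedComponentIn Kᶜ a = connectedComponentIn Kᶜ v :=
        connectedComponentIn_eq hvb
      have h3 : connectedComponentIn Kᶜ b = connectedComponentIn Kᶜ v :=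
        connectedComponentIn_eq hv
      rw [h2, ← h3]
      exact mem_connectedComponentIn hb
    rcases hdichot with hbd | hbd
    · apply aux_wind K hKcpt a b ha hb hbU hbd (fun z => Complex.exp (G z))
        (Complex.continuous_exp.comp G.continuous) (fun z => Complex.exp_ne_zero _)
      intro z hz
      rw [hGK z hz, hge z hz]
      show (z - a) / (z - b) * (z - b) = z - a
      exact div_mul_cancel₀ _ (sub_ne_zero.2 (hsub z hz).2)
    · have haUb : a ∉ connectedComponentIn Kᶜ b := by
        intro h
        apply hbU
        rw [← connectedComponentIn_eq h]
        exact mem_connectedComponentIn hb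
      apply aux_wind K hKcpt b a hb ha haUb hbd (fun z => Complex.exp (-G z))
        (Complex.continuous_exp.comp G.continuous.neg) (fun z => Complex.exp_ne_zero _)
      intro z hz
      rw [Complex.exp_neg, hGK z hz, hge z hz]
      show ((z - a) / (z - b))⁻¹ * (z - a) = z - b
      rw [inv_div]
      exact div_mul_cancel₀ _ (sub_ne_zero.2 (hsub z hz).1)
  have hne : Kᶜ.Nonempty := by
    obtain ⟨R₀, hR₀pos, hR₀⟩ := hKcpt.isBounded.subset_ball_lt 0 0
    refine ⟨((R₀ + 1 : ℝ) : ℂ), fun h => ?_⟩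
    have h1 := hR₀ h
    rw [mem_ball, dist_zero_right, Complex.norm_real, Real.norm_eq_abs] at h1
    have : R₀ + 1 ≤ |R₀ + 1| := le_abs_self _
    linarith
  rw [← hKo.isConnected_iff_isPathConnected]
  obtain ⟨x₀, hx₀⟩ := hne
  constructor
  · exact ⟨x₀, hx₀⟩
  · apply isPreconnected_of_forall x₀
    intro y hy
    exact ⟨connectedComponentIn Kᶜ x₀, connectedComponentIn_subset _ _,
      mem_connectedComponentIn hx₀, hsame x₀ hx₀ y hy, isPreconnected_connectedComponentIn⟩

private lemma jordan_transfer {A : Set (EuclideanSpace ℝ (Fin 2))}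
    (h : ℂ ≃ₜ EuclideanSpace ℝ (Fin 2))
    (hA : IsJordanArc A) :
    IsJordanArc (h ⁻¹' A) := by
  obtain ⟨φ, hc, hi, rfl⟩ := hA
  refine ⟨fun t => h.symm (φ t), h.symm.continuous.comp_continuousOn hc,
    fun s hs t ht hst => hi hs ht (h.symm.injective hst), ?_⟩
  rw [← Homeomorph.image_symm, Set.image_image]

/-- The complement of the union of two disjoint Jordan arcs in the plane is path-connected:
any two points of `ℝ² \ (L ∪ K')` can be joined by a path avoiding `L ∪ K'`. -/
theorem stmt18 (L K' : Set (EuclideanSpace ℝ (Fin 2)))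
    (hL : IsJordanArc L) (hK' : IsJordanArc K') (hdisj : Disjoint L K') :
    IsPathConnected ((univ : Set (EuclideanSpace ℝ (Fin 2))) \ (L ∪ K')) := by
  classical
  let h : ℂ ≃ₜ EuclideanSpace ℝ (Fin 2) :=
    Complex.orthonormalBasisOneI.repr.toHomeomorph
  have hmain := main_c (h ⁻¹' L) (h ⁻¹' K') (jordan_transfer h hL) (jordan_transfer h hK')
    (hdisj.preimage _)
  have himg := hmain.image h.continuous
  have heq : (⇑h) '' ((h ⁻¹' L) ∪ (h ⁻¹' K'))ᶜ = univ \ (L ∪ K') := by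
    rw [Set.image_compl_eq h.bijective, ← Set.preimage_union,
      Set.image_preimage_eq _ h.surjective, Set.compl_eq_univ_diff]
  rwa [heq] at himg
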